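/- Let B ⊆ E be compact. There exists a constant C < ∞, depending only on φ and B, such that for all μ, μ' ∈ M_B and all λ, λ' ∈ ℝ: ‖L^B(μ,λ)‖ ≤ C·‖(μ,λ)‖², and ‖L^B(μ,λ) − L^B(μ',λ')‖ ≤ C·‖(μ,λ) − (μ',λ')‖·(‖(μ,λ)‖ + ‖(μ',λ')‖). -/

import Mathlib

open MeasureTheory Set ENNReal

noncomputable section

/-- `φ : E → [0,∞)` is *sublinear* on `E = (0,∞)`: `φ (l*x) ≤ l * φ x` for `x ∈ E`, `l ≥ 1`. -/
def Sublinear (φ : ℝ → ℝ) : Prop :=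
  ∀ x : ℝ, 0 < x → ∀ l : ℝ, 1 ≤ l → φ (l * x) ≤ l * φ x

/-- `K` is a coagulation kernel: nonnegative, symmetric and measurable on `E × E`. -/
def IsCoagKernel (K : ℝ → ℝ → ℝ) : Prop :=
  Measurable ((Set.Ioi (0:ℝ) ×ˢ Set.Ioi (0:ℝ)).restrict (Function.uncurry K)) ∧
  (∀ x y : ℝ, 0 < x → 0 < y → 0 ≤ K x y ∧ K x y = K y x)

/-- Integral `⟨f, m⟩ = ∫ f dm` of `f` against a finite signed measure `m`. -/
def sInt (m : SignedMeasure ℝ) (f : ℝ → ℝ) : ℝ :=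
  ∫ x, f x ∂m.toJordanDecomposition.posPart -
    ∫ x, f x ∂m.toJordanDecomposition.negPart

/-- Iterated double integral `∫∫ g(x,y) m(dx) m(dy)` against a signed measure. -/
def sInt2 (m : SignedMeasure ℝ) (g : ℝ → ℝ → ℝ) : ℝ :=
  sInt m fun x => sInt m fun y => g x y

/-- Total variation norm `‖m‖` of a finite signed measure. -/
def mnorm (m : SignedMeasure ℝ) : ℝ := (m.totalVariation Set.univ).toReal

/-- `m` is supported on `B`: it vanishes on measurable sets disjoint from `B`;
so `m ∈ M_B`. -/
def SupportedOn (m : SignedMeasure ℝ) (B : Set ℝ) : Prop :=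
  ∀ A : Set ℝ, MeasurableSet A → A ∩ B = ∅ → m A = 0

/-- The pairing `⟨(f,a), L^B(m,l)⟩` defining the operator `L^B` on `M_B × ℝ`:
`⟨(f,a), L^B(m,l)⟩ = ½∫∫ {f(x+y)1_{x+y∈B} + aφ(x+y)1_{x+y∉B} − f(x) − f(y)} K(x,y) m(dx)m(dy)
  + l ∫ {aφ(x) − f(x)} φ(x) m(dx)`. -/
def pairLB (K : ℝ → ℝ → ℝ) (φ : ℝ → ℝ) (B : Set ℝ)
    (m : SignedMeasure ℝ) (l : ℝ) (f : ℝ → ℝ) (a : ℝ) : ℝ :=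
  (1/2) * sInt2 m (fun x y =>
      (B.indicator f (x + y) + a * Bᶜ.indicator φ (x + y) - f x - f y) * K x y)
    + l * sInt m (fun x => (a * φ x - f x) * φ x)

/-- A solution of equation (B) on `[0,∞)`: a map `t ↦ (μ_t, λ_t) ∈ M_B × ℝ`, continuous in
the norm `‖(μ,λ)‖ = ‖μ‖ + |λ|`, with `(μ_t, λ_t) = (μ_0, λ_0) + ∫₀ᵗ L^B(μ_s, λ_s) ds`,
expressed via pairings against bounded measurable functions `f` and reals `a`. -/
structure IsSolB (K : ℝ → ℝ → ℝ) (φ : ℝ → ℝ) (B : Set ℝ)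
    (p : ℝ → SignedMeasure ℝ × ℝ) : Prop where
  cont : ∀ t : ℝ, 0 ≤ t → ∀ ε : ℝ, 0 < ε → ∃ δ : ℝ, 0 < δ ∧ ∀ s : ℝ, 0 ≤ s →
    |s - t| < δ → mnorm ((p s).1 - (p t).1) + |(p s).2 - (p t).2| < ε
  suppB : ∀ t : ℝ, 0 ≤ t → SupportedOn (p t).1 B
  eqn : ∀ t : ℝ, 0 ≤ t → ∀ f : ℝ → ℝ, Measurable f → (∃ C : ℝ, ∀ x, |f x| ≤ C) →
    ∀ a : ℝ,
      sInt (p t).1 f + a * (p t).2 =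
        sInt (p 0).1 f + a * (p 0).2 +
          ∫ s in (0:ℝ)..t, pairLB K φ B (p s).1 (p s).2 f a

section AuxLemmas

lemma meas_indicator_of_restrict {α : Type*} [MeasurableSpace α] {s : Set α}
    (hs : MeasurableSet s) {f : α → ℝ} (hf : Measurable (s.restrict f)) :
    Measurable (s.indicator f) := by
  intro t ht
  have key : s.indicator f ⁻¹' t ∩ s = Subtype.val '' (s.restrict f ⁻¹' t) := by
    ext x
    simp only [Set.mem_inter_iff, Set.mem_preimage, Set.mem_image]
    constructor
    · rintro ⟨hxt, hxs⟩
      exact ⟨⟨x, hxs⟩, by simpa [Set.restrict, Set.indicator_of_mem hxs] using hxt, rfl⟩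
    · rintro ⟨⟨y, hy⟩, hyt, rfl⟩
      exact ⟨by simpa [Set.restrict, Set.indicator_of_mem hy] using hyt, hy⟩
  have hmeas : MeasurableSet (s.indicator f ⁻¹' t ∩ s) := by
    rw [key]
    exact (MeasurableEmbedding.subtype_coe hs).measurableSet_image.2 (hf ht)
  by_cases h0 : (0:ℝ) ∈ t
  · have h : s.indicator f ⁻¹' t = (s.indicator f ⁻¹' t ∩ s) ∪ sᶜ := by
      ext x
      by_cases hxs : x ∈ s <;>
        simp [Set.mem_preimage, Set.indicator_of_mem, Set.indicator_of_notMem, hxs, h0]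
    rw [h]; exact hmeas.union hs.compl
  · have h : s.indicator f ⁻¹' t = s.indicator f ⁻¹' t ∩ s := by
      ext x
      by_cases hxs : x ∈ s <;>
        simp [Set.mem_preimage, Set.indicator_of_mem, Set.indicator_of_notMem, hxs, h0]
    rw [h]; exact hmeas

lemma jordan_null {B : Set ℝ} (hB : MeasurableSet B) {m : SignedMeasure ℝ}
    (hm : SupportedOn m B) :
    m.toJordanDecomposition.posPart Bᶜ = 0 ∧ m.toJordanDecomposition.negPart Bᶜ = 0 := by
  obtain ⟨i, hi₁, hi₂, hi₃, hp, hn⟩ := m.toJordanDecomposition_spec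
  constructor
  · rw [hp, SignedMeasure.toMeasureOfZeroLE_apply _ hi₂ hi₁ hB.compl]
    have h : m (i ∩ Bᶜ) = 0 := by
      refine hm _ (hi₁.inter hB.compl) ?_
      rw [Set.inter_assoc, Set.compl_inter_self, Set.inter_empty]
    simp [h]
  · rw [hn, SignedMeasure.toMeasureOfLEZero_apply _ hi₃ hi₁.compl hB.compl]
    have h : m (iᶜ ∩ Bᶜ) = 0 := by
      refine hm _ (hi₁.compl.inter hB.compl) ?_
      rw [Set.inter_assoc, Set.compl_inter_self, Set.inter_empty]
    simp [h]

lemma mnorm_eq (m : SignedMeasure ℝ) :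
    mnorm m = (m.toJordanDecomposition.posPart Set.univ).toReal +
      (m.toJordanDecomposition.negPart Set.univ).toReal := by
  rw [mnorm, SignedMeasure.totalVariation, Measure.add_apply,
    ENNReal.toReal_add (measure_ne_top _ _) (measure_ne_top _ _)]

lemma mnorm_nonneg (m : SignedMeasure ℝ) : 0 ≤ mnorm m := ENNReal.toReal_nonneg

lemma signed_apply_eq (m : SignedMeasure ℝ) {A : Set ℝ} (hA : MeasurableSet A) :
    m A = (m.toJordanDecomposition.posPart A).toReal -
      (m.toJordanDecomposition.negPart A).toReal := by
  conv_lhs => rw [← m.toSignedMeasure_toJordanDecomposition]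
  rw [MeasureTheory.JordanDecomposition.toSignedMeasure,
    MeasureTheory.Measure.toSignedMeasure_sub_apply hA]
  rfl

lemma int_bound {ν : Measure ℝ} [IsFiniteMeasure ν] {B : Set ℝ} (hν : ν Bᶜ = 0)
    {u : ℝ → ℝ} {M : ℝ} (hu : ∀ x ∈ B, |u x| ≤ M) :
    |∫ x, u x ∂ν| ≤ M * (ν Set.univ).toReal := by
  have hae : ∀ᵐ x ∂ν, ‖u x‖ ≤ M := by
    refine ae_iff.2 (measure_mono_null (fun x hx => ?_) hν)
    simp only [Real.norm_eq_abs, Set.mem_setOf_eq, not_le] at hx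
    intro hxB
    exact absurd (hu x hxB) (not_le.2 hx)
  simpa [Real.norm_eq_abs, measureReal_def] using norm_integral_le_of_norm_le_const hae

lemma sInt_bound {B : Set ℝ} (hB : MeasurableSet B) {m : SignedMeasure ℝ}
    (hm : SupportedOn m B) {u : ℝ → ℝ} {M : ℝ} (hu : ∀ x ∈ B, |u x| ≤ M) :
    |sInt m u| ≤ M * mnorm m := by
  obtain ⟨hp, hn⟩ := jordan_null hB hm
  rw [sInt, mnorm_eq]
  calc |∫ x, u x ∂m.toJordanDecomposition.posPart -
        ∫ x, u x ∂m.toJordanDecomposition.negPart|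
      ≤ |∫ x, u x ∂m.toJordanDecomposition.posPart| +
        |∫ x, u x ∂m.toJordanDecomposition.negPart| := abs_sub _ _
    _ ≤ M * (m.toJordanDecomposition.posPart Set.univ).toReal +
        M * (m.toJordanDecomposition.negPart Set.univ).toReal :=
        add_le_add (int_bound hp hu) (int_bound hn hu)
    _ = M * ((m.toJordanDecomposition.posPart Set.univ).toReal +
        (m.toJordanDecomposition.negPart Set.univ).toReal) := by ring

lemma integrable_of_indicator {ν : Measure ℝ} [IsFiniteMeasure ν] {B : Set ℝ}
    (hν : ν Bᶜ = 0) {u : ℝ → ℝ} (hmeas : Measurable (B.indicator u))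
    {M : ℝ} (hu : ∀ x ∈ B, |u x| ≤ M) : Integrable u ν := by
  have hae : B.indicator u =ᵐ[ν] u := by
    refine ae_iff.2 (measure_mono_null (fun x hx => ?_) hν)
    simp only [Set.mem_setOf_eq] at hx
    intro hxB
    exact hx (Set.indicator_of_mem hxB u)
  refine Integrable.congr ⟨hmeas.aestronglyMeasurable, ?_⟩ hae
  refine HasFiniteIntegral.of_bounded (C := max M 0) (Filter.Eventually.of_forall fun x => ?_)
  by_cases hxB : x ∈ B
  · rw [Set.indicator_of_mem hxB]
    exact le_trans (hu x hxB) (le_max_left _ _)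
  · rw [Set.indicator_of_notMem hxB]
    simp [le_max_right]

lemma supportedOn_sub {B : Set ℝ} {m m' : SignedMeasure ℝ}
    (hm : SupportedOn m B) (hm' : SupportedOn m' B) : SupportedOn (m - m') B :=
  fun A hA hAB => by
    rw [VectorMeasure.sub_apply, hm A hA hAB, hm' A hA hAB, sub_zero]

lemma sInt_sub_measure {B : Set ℝ} (hB : MeasurableSet B) {m m' : SignedMeasure ℝ}
    (hm : SupportedOn m B) (hm' : SupportedOn m' B) {u : ℝ → ℝ}
    (hmeas : Measurable (B.indicator u)) {M : ℝ} (hu : ∀ x ∈ B, |u x| ≤ M) :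
    sInt m u - sInt m' u = sInt (m - m') u := by
  have hd : SupportedOn (m - m') B := supportedOn_sub hm hm'
  set a := (m - m').toJordanDecomposition.posPart with ha
  set b := (m - m').toJordanDecomposition.negPart with hb
  set c := m.toJordanDecomposition.posPart with hc
  set e := m.toJordanDecomposition.negPart with he
  set c' := m'.toJordanDecomposition.posPart with hc'
  set e' := m'.toJordanDecomposition.negPart with he'
  have hmeq : a + e + c' = b + c + e' := by
    refine Measure.ext fun A hA => ?_
    have h1 := signed_apply_eq (m - m') hA
    have h2 := signed_apply_eq m hA
    have h3 := signed_apply_eq m' hA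
    have h4 : (m - m') A = m A - m' A := VectorMeasure.sub_apply _ _ _
    rw [h1, h2, h3] at h4
    have haA : a A ≠ ⊤ := measure_ne_top _ _
    have hbA : b A ≠ ⊤ := measure_ne_top _ _
    have hcA : c A ≠ ⊤ := measure_ne_top _ _
    have heA : e A ≠ ⊤ := measure_ne_top _ _
    have hc'A : c' A ≠ ⊤ := measure_ne_top _ _
    have he'A : e' A ≠ ⊤ := measure_ne_top _ _
    simp only [Measure.add_apply]
    rw [← ENNReal.toReal_eq_toReal_iff' (by finiteness) (by finiteness)]
    have e1 : (a A + e A + c' A).toReal = (a A).toReal + (e A).toReal + (c' A).toReal := by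
      rw [ENNReal.toReal_add (by finiteness) hc'A, ENNReal.toReal_add haA heA]
    have e2 : (b A + c A + e' A).toReal = (b A).toReal + (c A).toReal + (e' A).toReal := by
      rw [ENNReal.toReal_add (by finiteness) he'A, ENNReal.toReal_add hbA hcA]
    rw [e1, e2]
    linarith
  obtain ⟨hpa, hna⟩ := jordan_null hB hd
  obtain ⟨hpc, hnc⟩ := jordan_null hB hm
  obtain ⟨hpc', hnc'⟩ := jordan_null hB hm'
  have ia := integrable_of_indicator hpa hmeas hu
  have ib := integrable_of_indicator hna hmeas hu
  have ic := integrable_of_indicator hpc hmeas hu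
  have ie := integrable_of_indicator hnc hmeas hu
  have ic' := integrable_of_indicator hpc' hmeas hu
  have ie' := integrable_of_indicator hnc' hmeas hu
  have hint : ∫ x, u x ∂(a + e + c') = ∫ x, u x ∂(b + c + e') := by rw [hmeq]
  rw [integral_add_measure (ia.add_measure ie) ic', integral_add_measure ia ie,
    integral_add_measure (ib.add_measure ic) ie', integral_add_measure ib ic] at hint
  simp only [sInt, ← ha, ← hb, ← hc, ← he, ← hc', ← he']
  linarith

lemma sInt_sub_fun {B : Set ℝ} (hB : MeasurableSet B) {m : SignedMeasure ℝ}
    (hm : SupportedOn m B) {u v : ℝ → ℝ}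
    (hu : Measurable (B.indicator u)) (hv : Measurable (B.indicator v))
    {Mu Mv : ℝ} (hub : ∀ x ∈ B, |u x| ≤ Mu) (hvb : ∀ x ∈ B, |v x| ≤ Mv) :
    sInt m u - sInt m v = sInt m (fun x => u x - v x) := by
  obtain ⟨hp, hn⟩ := jordan_null hB hm
  have iup := integrable_of_indicator hp hu hub
  have iun := integrable_of_indicator hn hu hub
  have ivp := integrable_of_indicator hp hv hvb
  have ivn := integrable_of_indicator hn hv hvb
  simp only [sInt, integral_sub iup ivp, integral_sub iun ivn]
  ring

end AuxLemmas

open Pointwise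

set_option maxHeartbeats 1000000 in
theorem LB_norm_estimates
    (φ : ℝ → ℝ) (hφcont : ContinuousOn φ (Set.Ioi 0))
    (hφpos : ∀ x : ℝ, 0 < x → 0 < φ x) (hφsub : Sublinear φ)
    (K : ℝ → ℝ → ℝ) (hK : IsCoagKernel K)
    (hKφ : ∀ x y : ℝ, 0 < x → 0 < y → K x y ≤ φ x * φ y)
    (B : Set ℝ) (hBcpt : IsCompact B) (hBE : B ⊆ Set.Ioi 0) :
    ∃ C : ℝ, 0 ≤ C ∧
      (∀ m : SignedMeasure ℝ, SupportedOn m B → ∀ l : ℝ,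
        ∀ f : ℝ → ℝ, Measurable f → (∀ x, |f x| ≤ 1) → ∀ a : ℝ, |a| ≤ 1 →
          |pairLB K φ B m l f a| ≤ C * (mnorm m + |l|) ^ 2) ∧
      (∀ m m' : SignedMeasure ℝ, SupportedOn m B → SupportedOn m' B → ∀ l l' : ℝ,
        ∀ f : ℝ → ℝ, Measurable f → (∀ x, |f x| ≤ 1) → ∀ a : ℝ, |a| ≤ 1 →
          |pairLB K φ B m l f a - pairLB K φ B m' l' f a| ≤
            C * (mnorm (m - m') + |l - l'|) *
              ((mnorm m + |l|) + (mnorm m' + |l'|))) := by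
  have hB : MeasurableSet B := hBcpt.isClosed.measurableSet
  set S : Set ℝ := B ∪ (B + B) with hS
  have hScpt : IsCompact S := hBcpt.union (hBcpt.add hBcpt)
  have hSE : S ⊆ Set.Ioi 0 := by
    rintro z (hz | hz)
    · exact hBE hz
    · obtain ⟨x, hx, y, hy, rfl⟩ := hz
      exact add_pos (mem_Ioi.1 (hBE hx)) (mem_Ioi.1 (hBE hy))
  obtain ⟨M0, hM0⟩ := hScpt.exists_bound_of_continuousOn (hφcont.mono hSE)
  set M := max M0 1 with hM
  have hM1 : (1:ℝ) ≤ M := le_max_right _ _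
  have hM0' : (0:ℝ) ≤ M := le_trans zero_le_one hM1
  have hφM : ∀ z ∈ S, φ z ≤ M := fun z hz =>
    le_trans (le_trans (le_abs_self _)
      (by simpa [Real.norm_eq_abs] using hM0 z hz)) (le_max_left _ _)
  have hφ0 : ∀ z ∈ S, 0 ≤ φ z := fun z hz => (hφpos z (hSE hz)).le
  set Mg := (3 + M) * (M * M) with hMg
  set Mh := (M + 1) * M with hMh
  have hMg0 : 0 ≤ Mg := by nlinarith
  have hMh0 : 0 ≤ Mh := by nlinarith
  -- bound on the bilinear integrand
  have hgbd : ∀ (f : ℝ → ℝ), (∀ x, |f x| ≤ 1) → ∀ (a : ℝ), |a| ≤ 1 → ∀ x ∈ B, ∀ y ∈ B,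
      |(B.indicator f (x + y) + a * Bᶜ.indicator φ (x + y) - f x - f y) * K x y| ≤ Mg := by
    intro f hfb a ha x hx y hy
    have hx0 : (0:ℝ) < x := hBE hx
    have hy0 : (0:ℝ) < y := hBE hy
    have hxyS : x + y ∈ S := Or.inr (Set.add_mem_add hx hy)
    have hK0 : 0 ≤ K x y := (hK.2 x y hx0 hy0).1
    have hKb : K x y ≤ M * M :=
      le_trans (hKφ x y hx0 hy0)
        (mul_le_mul (hφM x (Or.inl hx)) (hφM y (Or.inl hy)) (hφ0 y (Or.inl hy)) hM0')
    have h1 : |B.indicator f (x + y)| ≤ 1 := by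
      by_cases h : x + y ∈ B
      · rw [Set.indicator_of_mem h]; exact hfb _
      · rw [Set.indicator_of_notMem h]; simp
    have h2 : |Bᶜ.indicator φ (x + y)| ≤ M := by
      by_cases h : x + y ∈ B
      · rw [Set.indicator_of_notMem (by simpa using h)]; simpa using hM0'
      · rw [Set.indicator_of_mem (by simpa using h)]
        rw [abs_of_nonneg (hφ0 _ hxyS)]
        exact hφM _ hxyS
    have haφ : |a * Bᶜ.indicator φ (x + y)| ≤ M := by
      rw [abs_mul]
      calc |a| * |Bᶜ.indicator φ (x + y)| ≤ 1 * M :=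
            mul_le_mul ha h2 (abs_nonneg _) zero_le_one
        _ = M := one_mul M
    have hc : |B.indicator f (x + y) + a * Bᶜ.indicator φ (x + y) - f x - f y| ≤ 3 + M := by
      have e1 := abs_le.1 h1
      have e2 := abs_le.1 haφ
      have e3 := abs_le.1 (hfb x)
      have e4 := abs_le.1 (hfb y)
      rw [abs_le]
      constructor <;> [linarith [e1.1, e2.1, e3.2, e4.2]; linarith [e1.2, e2.2, e3.1, e4.1]]
    calc |(B.indicator f (x + y) + a * Bᶜ.indicator φ (x + y) - f x - f y) * K x y|
        = |B.indicator f (x + y) + a * Bᶜ.indicator φ (x + y) - f x - f y| * |K x y| :=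
          abs_mul _ _
      _ ≤ (3 + M) * (M * M) := by
          refine mul_le_mul hc ?_ (abs_nonneg _) (by nlinarith)
          rwa [abs_of_nonneg hK0]
  -- bound on the linear integrand
  have hhbd : ∀ (f : ℝ → ℝ), (∀ x, |f x| ≤ 1) → ∀ (a : ℝ), |a| ≤ 1 → ∀ x ∈ B,
      |(a * φ x - f x) * φ x| ≤ Mh := by
    intro f hfb a ha x hx
    have hφx0 : 0 ≤ φ x := hφ0 x (Or.inl hx)
    have hφxM : φ x ≤ M := hφM x (Or.inl hx)
    have h1 : |a * φ x - f x| ≤ M + 1 := by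
      have e1 := abs_le.1 ha
      have e2 := abs_le.1 (hfb x)
      have e3 : |a * φ x| ≤ M := by
        rw [abs_mul, abs_of_nonneg hφx0]
        calc |a| * φ x ≤ 1 * M := mul_le_mul ha hφxM hφx0 zero_le_one
          _ = M := one_mul M
      have e4 := abs_le.1 e3
      rw [abs_le]
      constructor <;> [linarith [e4.1, e2.2]; linarith [e4.2, e2.1]]
    calc |(a * φ x - f x) * φ x| = |a * φ x - f x| * |φ x| := abs_mul _ _
      _ ≤ (M + 1) * M := by
          rw [abs_of_nonneg hφx0]
          exact mul_le_mul h1 hφxM hφx0 (by linarith)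
  -- measurability of indicator versions of the integrands
  have hIφB : Measurable (B.indicator φ) :=
    meas_indicator_of_restrict hB ((hφcont.mono hBE).restrict).measurable
  have hU : MeasurableSet (Bᶜ ∩ Set.Ioi 0) := hB.compl.inter measurableSet_Ioi
  have hIφC : Measurable ((Bᶜ ∩ Set.Ioi 0).indicator φ) :=
    meas_indicator_of_restrict hU ((hφcont.mono Set.inter_subset_right).restrict).measurable
  have hK' : Measurable ((Set.Ioi (0:ℝ) ×ˢ Set.Ioi (0:ℝ)).indicator (Function.uncurry K)) :=
    meas_indicator_of_restrict (measurableSet_Ioi.prod measurableSet_Ioi) hK.1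
  have hhmeas : ∀ (f : ℝ → ℝ), Measurable f → ∀ (a : ℝ),
      Measurable (B.indicator (fun x => (a * φ x - f x) * φ x)) := by
    intro f hf a
    have heq : B.indicator (fun x => (a * φ x - f x) * φ x) =
        fun x => (a * B.indicator φ x - B.indicator f x) * B.indicator φ x := by
      funext x
      by_cases hx : x ∈ B
      · simp [Set.indicator_of_mem hx]
      · simp [Set.indicator_of_notMem hx]
    rw [heq]
    exact ((measurable_const.mul hIφB).sub (hf.indicator hB)).mul hIφB
  -- joint measurable version of the bilinear integrand
  have hGmeas : ∀ (f : ℝ → ℝ), Measurable f → ∀ (a : ℝ),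
      Measurable (fun p : ℝ × ℝ =>
        (B.indicator f (p.1 + p.2) + a * (Bᶜ ∩ Set.Ioi 0).indicator φ (p.1 + p.2)
          - B.indicator f p.1 - B.indicator f p.2) *
        (Set.Ioi (0:ℝ) ×ˢ Set.Ioi (0:ℝ)).indicator (Function.uncurry K) p) := by
    intro f hf a
    have hIf : Measurable (B.indicator f) := hf.indicator hB
    have hadd : Measurable (fun p : ℝ × ℝ => p.1 + p.2) := measurable_fst.add measurable_snd
    exact ((((hIf.comp hadd).add (measurable_const.mul (hIφC.comp hadd))).sub
      (hIf.comp measurable_fst)).sub (hIf.comp measurable_snd)).mul hK'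
  have hgG : ∀ (f : ℝ → ℝ) (a : ℝ), ∀ x ∈ B, ∀ y ∈ B,
      (B.indicator f (x + y) + a * Bᶜ.indicator φ (x + y) - f x - f y) * K x y =
      (B.indicator f (x + y) + a * (Bᶜ ∩ Set.Ioi 0).indicator φ (x + y)
          - B.indicator f x - B.indicator f y) *
        (Set.Ioi (0:ℝ) ×ˢ Set.Ioi (0:ℝ)).indicator (Function.uncurry K) (x, y) := by
    intro f a x hx y hy
    have hx0 : (0:ℝ) < x := hBE hx
    have hy0 : (0:ℝ) < y := hBE hy
    have hxy0 : (0:ℝ) < x + y := add_pos hx0 hy0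
    have e1 : (Bᶜ ∩ Set.Ioi 0).indicator φ (x + y) = Bᶜ.indicator φ (x + y) := by
      by_cases h : x + y ∈ B <;>
        simp [Set.indicator_apply, Set.mem_inter_iff, Set.mem_compl_iff, h, hxy0]
    have e2 : (Set.Ioi (0:ℝ) ×ˢ Set.Ioi (0:ℝ)).indicator (Function.uncurry K) (x, y) =
        K x y :=
      Set.indicator_of_mem
        (show (x, y) ∈ Set.Ioi (0:ℝ) ×ˢ Set.Ioi (0:ℝ) from ⟨hx0, hy0⟩) (Function.uncurry K)
    rw [e1, e2, Set.indicator_of_mem hx, Set.indicator_of_mem hy]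
  -- measurability of the indicator of inner slices
  have hinner_meas : ∀ (f : ℝ → ℝ), Measurable f → ∀ (a : ℝ), ∀ x ∈ B,
      Measurable (B.indicator (fun y =>
        (B.indicator f (x + y) + a * Bᶜ.indicator φ (x + y) - f x - f y) * K x y)) := by
    intro f hf a x hx
    have heq : B.indicator (fun y =>
        (B.indicator f (x + y) + a * Bᶜ.indicator φ (x + y) - f x - f y) * K x y) =
        B.indicator (fun y =>
          (B.indicator f ((x, y).1 + (x, y).2)
            + a * (Bᶜ ∩ Set.Ioi 0).indicator φ ((x, y).1 + (x, y).2)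
            - B.indicator f (x, y).1 - B.indicator f (x, y).2) *
          (Set.Ioi (0:ℝ) ×ˢ Set.Ioi (0:ℝ)).indicator (Function.uncurry K) (x, y)) := by
      funext y
      by_cases hy : y ∈ B
      · rw [Set.indicator_of_mem hy, Set.indicator_of_mem hy]
        exact hgG f a x hx y hy
      · rw [Set.indicator_of_notMem hy, Set.indicator_of_notMem hy]
    rw [heq]
    exact ((hGmeas f hf a).comp measurable_prodMk_left).indicator hB
  -- measurability of the indicator of the function x ↦ sInt m (g x)
  have houter_meas : ∀ (f : ℝ → ℝ), Measurable f → ∀ (a : ℝ),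
      ∀ m : SignedMeasure ℝ, SupportedOn m B →
      Measurable (B.indicator (fun x => sInt m (fun y =>
        (B.indicator f (x + y) + a * Bᶜ.indicator φ (x + y) - f x - f y) * K x y))) := by
    intro f hf a m hm
    obtain ⟨hp, hn⟩ := jordan_null hB hm
    set G : ℝ × ℝ → ℝ := fun p =>
      (B.indicator f (p.1 + p.2) + a * (Bᶜ ∩ Set.Ioi 0).indicator φ (p.1 + p.2)
        - B.indicator f p.1 - B.indicator f p.2) *
      (Set.Ioi (0:ℝ) ×ˢ Set.Ioi (0:ℝ)).indicator (Function.uncurry K) p with hG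
    have hGm : Measurable G := hGmeas f hf a
    set v : ℝ → ℝ := fun x => (∫ y, G (x, y) ∂m.toJordanDecomposition.posPart) -
        ∫ y, G (x, y) ∂m.toJordanDecomposition.negPart with hv
    have hvm : Measurable v := by
      have h1 := (hGm.stronglyMeasurable.integral_prod_right'
        (ν := m.toJordanDecomposition.posPart)).measurable
      have h2 := (hGm.stronglyMeasurable.integral_prod_right'
        (ν := m.toJordanDecomposition.negPart)).measurable
      exact h1.sub h2
    have heq : B.indicator (fun x => sInt m (fun y =>
        (B.indicator f (x + y) + a * Bᶜ.indicator φ (x + y) - f x - f y) * K x y)) =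
        B.indicator v := by
      funext x
      by_cases hx : x ∈ B
      · rw [Set.indicator_of_mem hx, Set.indicator_of_mem hx]
        have hcongr : ∀ ν : Measure ℝ, ν Bᶜ = 0 →
            ∫ y, (B.indicator f (x + y) + a * Bᶜ.indicator φ (x + y) - f x - f y) * K x y ∂ν
              = ∫ y, G (x, y) ∂ν := by
          intro ν hν
          refine integral_congr_ae (ae_iff.2 (measure_mono_null (fun y hy => ?_) hν))
          simp only [Set.mem_setOf_eq] at hy
          intro hyB
          exact hy (hgG f a x hx y hyB)
        rw [sInt, hcongr _ hp, hcongr _ hn]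
      · rw [Set.indicator_of_notMem hx, Set.indicator_of_notMem hx]
    rw [heq]
    exact hvm.indicator hB
  refine ⟨Mg + Mh, by nlinarith, ?_, ?_⟩
  · -- first estimate
    intro m hm l f hf hfb a ha
    have hgb := hgbd f hfb a ha
    have hhb := hhbd f hfb a ha
    have hinner : ∀ x ∈ B, |sInt m (fun y =>
        (B.indicator f (x + y) + a * Bᶜ.indicator φ (x + y) - f x - f y) * K x y)|
        ≤ Mg * mnorm m := fun x hx => sInt_bound hB hm (hgb x hx)
    have h2 : |sInt2 m (fun x y =>
        (B.indicator f (x + y) + a * Bᶜ.indicator φ (x + y) - f x - f y) * K x y)|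
        ≤ (Mg * mnorm m) * mnorm m := sInt_bound hB hm hinner
    have h3 : |sInt m (fun x => (a * φ x - f x) * φ x)| ≤ Mh * mnorm m :=
      sInt_bound hB hm hhb
    rw [pairLB]
    have hn0 : 0 ≤ mnorm m := mnorm_nonneg m
    have hl0 : 0 ≤ |l| := abs_nonneg l
    calc |1/2 * sInt2 m (fun x y =>
          (B.indicator f (x + y) + a * Bᶜ.indicator φ (x + y) - f x - f y) * K x y)
          + l * sInt m (fun x => (a * φ x - f x) * φ x)|
        ≤ 1/2 * |sInt2 m (fun x y =>
            (B.indicator f (x + y) + a * Bᶜ.indicator φ (x + y) - f x - f y) * K x y)|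
          + |l| * |sInt m (fun x => (a * φ x - f x) * φ x)| := by
          refine le_trans (abs_add_le _ _) ?_
          rw [abs_mul, abs_mul]
          simp [abs_of_nonneg]
      _ ≤ 1/2 * ((Mg * mnorm m) * mnorm m) + |l| * (Mh * mnorm m) := by
          refine add_le_add (by linarith) (mul_le_mul_of_nonneg_left h3 hl0)
      _ ≤ (Mg + Mh) * (mnorm m + |l|) ^ 2 := by
          nlinarith [mul_nonneg hMg0 (mul_nonneg hn0 hl0),
            mul_nonneg hMg0 (mul_nonneg hl0 hl0),
            mul_nonneg hMh0 (mul_nonneg hn0 hn0),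
            mul_nonneg hMh0 (mul_nonneg hl0 hl0),
            mul_nonneg hMg0 (mul_nonneg hn0 hn0),
            mul_nonneg hMh0 (mul_nonneg hn0 hl0)]
  · -- second estimate
    intro m m' hm hm' l l' f hf hfb a ha
    have hd : SupportedOn (m - m') B := supportedOn_sub hm hm'
    have hgb := hgbd f hfb a ha
    have hhb := hhbd f hfb a ha
    set g : ℝ → ℝ → ℝ := fun x y =>
      (B.indicator f (x + y) + a * Bᶜ.indicator φ (x + y) - f x - f y) * K x y with hgdef
    set hfun : ℝ → ℝ := fun x => (a * φ x - f x) * φ x with hhdef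
    set F : ℝ → ℝ := fun x => sInt m (fun y => g x y) with hF
    set F' : ℝ → ℝ := fun x => sInt m' (fun y => g x y) with hF'
    set n := mnorm m with hn
    set n' := mnorm m' with hn'
    set dm := mnorm (m - m') with hdm
    set dl := |l - l'| with hdl
    have hn0 : 0 ≤ n := mnorm_nonneg m
    have hn'0 : 0 ≤ n' := mnorm_nonneg m'
    have hdm0 : 0 ≤ dm := mnorm_nonneg _
    have hdl0 : 0 ≤ dl := abs_nonneg _
    have hl0 : 0 ≤ |l| := abs_nonneg l
    have hl'0 : 0 ≤ |l'| := abs_nonneg l'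
    have hFbd : ∀ x ∈ B, |F x| ≤ Mg * n := fun x hx => sInt_bound hB hm (hgb x hx)
    have hF'bd : ∀ x ∈ B, |F' x| ≤ Mg * n' := fun x hx => sInt_bound hB hm' (hgb x hx)
    have hwbd : ∀ x ∈ B, |F x - F' x| ≤ Mg * dm := by
      intro x hx
      have := sInt_sub_measure hB hm hm' (hinner_meas f hf a x hx) (hgb x hx)
      rw [hF, hF', this]
      exact sInt_bound hB hd (hgb x hx)
    have hFmeas : Measurable (B.indicator F) := houter_meas f hf a m hm
    have hF'meas : Measurable (B.indicator F') := houter_meas f hf a m' hm'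
    have eA : sInt m F - sInt m' F = sInt (m - m') F :=
      sInt_sub_measure hB hm hm' hFmeas hFbd
    have hAbd : |sInt (m - m') F| ≤ (Mg * n) * dm := sInt_bound hB hd hFbd
    have eB : sInt m' F - sInt m' F' = sInt m' (fun x => F x - F' x) :=
      sInt_sub_fun hB hm' hFmeas hF'meas hFbd hF'bd
    have hBbd : |sInt m' (fun x => F x - F' x)| ≤ (Mg * dm) * n' :=
      sInt_bound hB hm' hwbd
    have eH : sInt m hfun - sInt m' hfun = sInt (m - m') hfun :=
      sInt_sub_measure hB hm hm' (hhmeas f hf a) hhb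
    have hHbd : |sInt (m - m') hfun| ≤ Mh * dm := sInt_bound hB hd hhb
    have hH'bd : |sInt m' hfun| ≤ Mh * n' := sInt_bound hB hm' hhb
    have hsplit : pairLB K φ B m l f a - pairLB K φ B m' l' f a =
        1/2 * (sInt (m - m') F + sInt m' (fun x => F x - F' x))
          + (l * sInt (m - m') hfun + (l - l') * sInt m' hfun) := by
      rw [pairLB, pairLB]
      have hs2 : sInt2 m g = sInt m F := rfl
      have hs2' : sInt2 m' g = sInt m' F' := rfl
      rw [← hgdef, ← hhdef, hs2, hs2']
      linear_combination (1/2 : ℝ) * eA + (1/2 : ℝ) * eB + l * eH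
    rw [hsplit]
    have step : |1/2 * (sInt (m - m') F + sInt m' (fun x => F x - F' x))
          + (l * sInt (m - m') hfun + (l - l') * sInt m' hfun)|
        ≤ 1/2 * ((Mg * n) * dm + (Mg * dm) * n') + (|l| * (Mh * dm) + dl * (Mh * n')) := by
      have t1 : |sInt (m - m') F + sInt m' (fun x => F x - F' x)|
          ≤ (Mg * n) * dm + (Mg * dm) * n' :=
        le_trans (abs_add_le _ _) (add_le_add hAbd hBbd)
      have t2 : |l * sInt (m - m') hfun| ≤ |l| * (Mh * dm) := by
        rw [abs_mul]; exact mul_le_mul_of_nonneg_left hHbd hl0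
      have t3 : |(l - l') * sInt m' hfun| ≤ dl * (Mh * n') := by
        rw [abs_mul]; exact mul_le_mul_of_nonneg_left hH'bd hdl0
      have u0 : |1/2 * (sInt (m - m') F + sInt m' (fun x => F x - F' x))
            + (l * sInt (m - m') hfun + (l - l') * sInt m' hfun)|
          ≤ 1/2 * |sInt (m - m') F + sInt m' (fun x => F x - F' x)|
            + (|l * sInt (m - m') hfun| + |(l - l') * sInt m' hfun|) := by
        refine le_trans (abs_add_le _ _) ?_
        rw [abs_mul]
        have h12 : |(1:ℝ)/2| = 1/2 := by norm_num
        rw [h12]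
        gcongr
        exact abs_add_le _ _
      refine le_trans u0 ?_
      linarith [t1, t2, t3]
    refine le_trans step ?_
    linarith [mul_nonneg (mul_nonneg hMg0 hdm0) hn0, mul_nonneg (mul_nonneg hMg0 hdm0) hl0,
      mul_nonneg (mul_nonneg hMg0 hdm0) hn'0, mul_nonneg (mul_nonneg hMg0 hdm0) hl'0,
      mul_nonneg (mul_nonneg hMg0 hdl0) hn0, mul_nonneg (mul_nonneg hMg0 hdl0) hl0,
      mul_nonneg (mul_nonneg hMg0 hdl0) hn'0, mul_nonneg (mul_nonneg hMg0 hdl0) hl'0,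
      mul_nonneg (mul_nonneg hMh0 hdm0) hn0, mul_nonneg (mul_nonneg hMh0 hdm0) hl0,
      mul_nonneg (mul_nonneg hMh0 hdm0) hn'0, mul_nonneg (mul_nonneg hMh0 hdm0) hl'0,
      mul_nonneg (mul_nonneg hMh0 hdl0) hn0, mul_nonneg (mul_nonneg hMh0 hdl0) hl0,
      mul_nonneg (mul_nonneg hMh0 hdl0) hn'0, mul_nonneg (mul_nonneg hMh0 hdl0) hl'0]

end
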